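/- The function f(x) = (e^x - 1)/x for x ≠ 0, with f(0) = 1, is strictly convex on ℝ: its second derivative f''(x) = ((x² - 2x + 2)e^x - 2)/x³ is strictly positive for x ≠ 0, and f''(0) = 1/3 > 0. -/

import Mathlib

open Real Filter Set

noncomputable def Faux : ℝ → ℝ := fun x => if x = 0 then 1 else (Real.exp x - 1) / x
noncomputable def Faux1 : ℝ → ℝ := fun x => if x = 0 then 1/2 else ((x - 1) * Real.exp x + 1) / x ^ 2
noncomputable def Faux2 : ℝ → ℝ := fun x =>
  if x = 0 then 1/3 else ((x ^ 2 - 2 * x + 2) * Real.exp x - 2) / x ^ 3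

lemma Faux_eventually {x : ℝ} (hx : x ≠ 0) :
    (fun y => (Real.exp y - 1) / y) =ᶠ[nhds x] Faux := by
  filter_upwards [isOpen_ne.mem_nhds hx] with y hy
  simp [Faux, hy]

lemma Faux1_eventually {x : ℝ} (hx : x ≠ 0) :
    (fun y => ((y - 1) * Real.exp y + 1) / y ^ 2) =ᶠ[nhds x] Faux1 := by
  filter_upwards [isOpen_ne.mem_nhds hx] with y hy
  simp [Faux1, hy]

lemma hasDerivAt_Faux_ne {x : ℝ} (hx : x ≠ 0) : HasDerivAt Faux (Faux1 x) x := by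
  have h : HasDerivAt (fun y => (Real.exp y - 1) / y) (((x - 1) * Real.exp x + 1) / x ^ 2) x := by
    have := ((Real.hasDerivAt_exp x).sub_const 1).div (hasDerivAt_id x) hx
    refine this.congr_deriv ?_
    simp only [id]
    field_simp
    ring
  rw [Faux1, if_neg hx]
  exact (Faux_eventually hx).hasDerivAt_iff.mp h

lemma sum3 (x : ℝ) : (∑ m ∈ Finset.range 3, x ^ m / m.factorial) = 1 + x + x ^ 2 / 2 := by
  simp [Finset.sum_range_succ]

lemma sum5 (x : ℝ) : (∑ m ∈ Finset.range 5, x ^ m / m.factorial)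
    = 1 + x + x ^ 2 / 2 + x ^ 3 / 6 + x ^ 4 / 24 := by
  simp [Finset.sum_range_succ, Nat.factorial]

lemma hasDerivAt_Faux_zero : HasDerivAt Faux (1/2) 0 := by
  rw [hasDerivAt_iff_tendsto_slope]
  rw [← tendsto_sub_nhds_zero_iff]
  apply squeeze_zero_norm' (a := fun x => |x| * (2/9))
  · filter_upwards [eventually_nhdsWithin_of_eventually_nhds
      (eventually_abs_sub_lt 0 (by norm_num : (0:ℝ) < 1)), self_mem_nhdsWithin] with x hx1 hx0
    have hx0' : x ≠ 0 := hx0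
    have hb := Real.exp_bound (x := x) (by simpa using hx1.le) (n := 3) (by norm_num)
    rw [sum3] at hb
    have : slope Faux 0 x - 1/2 = (Real.exp x - (1 + x + x ^ 2 / 2)) / x ^ 2 := by
      rw [slope_def_field, Faux, Faux, if_pos rfl, if_neg hx0']
      field_simp
      ring
    rw [Real.norm_eq_abs, this, abs_div, abs_pow]
    rw [div_le_iff₀ (by positivity)]
    calc |Real.exp x - (1 + x + x ^ 2 / 2)| ≤ |x| ^ 3 * (4 / (6 * 3)) := by
          convert hb using 2 <;> norm_num
      _ ≤ |x| * (2/9) * |x| ^ 2 := by ring_nf; rfl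
  · have : Tendsto (fun x : ℝ => |x| * (2/9)) (nhds 0) (nhds (|(0:ℝ)| * (2/9))) :=
      (continuous_abs.tendsto 0).mul_const _
    simpa using this.mono_left nhdsWithin_le_nhds

lemma hasDerivAt_Faux1_ne {x : ℝ} (hx : x ≠ 0) : HasDerivAt Faux1 (Faux2 x) x := by
  have h : HasDerivAt (fun y => ((y - 1) * Real.exp y + 1) / y ^ 2)
      (((x ^ 2 - 2 * x + 2) * Real.exp x - 2) / x ^ 3) x := by
    have hnum : HasDerivAt (fun y : ℝ => (y - 1) * Real.exp y + 1)
        (1 * Real.exp x + (x - 1) * Real.exp x) x :=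
      (((hasDerivAt_id x).sub_const 1).mul (Real.hasDerivAt_exp x)).add_const 1
    have hden : HasDerivAt (fun y : ℝ => y ^ 2) (2 * x) x := by
      simpa using hasDerivAt_pow 2 x
    have := hnum.div hden (pow_ne_zero 2 hx)
    refine this.congr_deriv ?_
    field_simp
    ring
  rw [Faux2, if_neg hx]
  exact (Faux1_eventually hx).hasDerivAt_iff.mp h

lemma hasDerivAt_Faux1_zero : HasDerivAt Faux1 (1/3) 0 := by
  rw [hasDerivAt_iff_tendsto_slope]
  rw [← tendsto_sub_nhds_zero_iff]
  apply squeeze_zero_norm' (a := fun x => |x|)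
  · filter_upwards [eventually_nhdsWithin_of_eventually_nhds
      (eventually_abs_sub_lt 0 (by norm_num : (0:ℝ) < 1)), self_mem_nhdsWithin] with x hx1 hx0
    have hx0' : x ≠ 0 := hx0
    have hx1' : |x| ≤ 1 := by simpa using hx1.le
    have hb := Real.exp_bound (x := x) hx1' (n := 5) (by norm_num)
    rw [sum5] at hb
    have hb' : |Real.exp x - (1 + x + x ^ 2 / 2 + x ^ 3 / 6 + x ^ 4 / 24)| ≤ |x| ^ 5 / 100 := by
      calc _ ≤ |x| ^ 5 * ((5:ℕ).succ / ((5:ℕ).factorial * 5)) := hb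
        _ = |x| ^ 5 / 100 := by norm_num [Nat.factorial]; ring
    have key : slope Faux1 0 x - 1/3
        = ((x - 1) * Real.exp x + 1 - x ^ 2 / 2 - x ^ 3 / 3) / x ^ 3 := by
      rw [slope_def_field, Faux1, Faux1, if_pos rfl, if_neg hx0']
      field_simp
      ring
    set R := Real.exp x - (1 + x + x ^ 2 / 2 + x ^ 3 / 6 + x ^ 4 / 24) with hR
    have hnum : (x - 1) * Real.exp x + 1 - x ^ 2 / 2 - x ^ 3 / 3
        = x ^ 4 / 8 + x ^ 5 / 24 + (x - 1) * R := by
      rw [hR]; ring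
    have habs : |(x - 1) * Real.exp x + 1 - x ^ 2 / 2 - x ^ 3 / 3| ≤ |x| ^ 4 := by
      rw [hnum]
      have h1 : |x ^ 4 / 8 + x ^ 5 / 24 + (x - 1) * R|
          ≤ |x| ^ 4 / 8 + |x| ^ 5 / 24 + |x - 1| * |R| := by
        calc |x ^ 4 / 8 + x ^ 5 / 24 + (x - 1) * R|
            ≤ |x ^ 4 / 8 + x ^ 5 / 24| + |(x - 1) * R| := abs_add_le _ _
          _ ≤ |x ^ 4 / 8| + |x ^ 5 / 24| + |x - 1| * |R| := by
              rw [abs_mul]; gcongr; exact abs_add_le _ _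
          _ = |x| ^ 4 / 8 + |x| ^ 5 / 24 + |x - 1| * |R| := by
              rw [abs_div, abs_div, abs_pow, abs_pow]; norm_num
      have h2 : |x - 1| ≤ 2 := by
        calc |x - 1| ≤ |x| + 1 := by simpa using abs_sub x 1
          _ ≤ 2 := by linarith
      have h3 : |x| ^ 5 ≤ |x| ^ 4 := pow_le_pow_of_le_one (abs_nonneg x) hx1' (by norm_num)
      have h4 : (0:ℝ) ≤ |R| := abs_nonneg R
      calc |x ^ 4 / 8 + x ^ 5 / 24 + (x - 1) * R|
          ≤ |x| ^ 4 / 8 + |x| ^ 5 / 24 + |x - 1| * |R| := h1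
        _ ≤ |x| ^ 4 / 8 + |x| ^ 4 / 24 + 2 * (|x| ^ 5 / 100) := by
            gcongr
        _ ≤ |x| ^ 4 := by nlinarith
    rw [Real.norm_eq_abs, key, abs_div, abs_pow]
    rw [div_le_iff₀ (by positivity)]
    calc |(x - 1) * Real.exp x + 1 - x ^ 2 / 2 - x ^ 3 / 3| ≤ |x| ^ 4 := habs
      _ = |x| * |x| ^ 3 := by ring
  · simpa using (continuous_abs.tendsto 0).mono_left (nhdsWithin_le_nhds (s := {(0:ℝ)}ᶜ))

lemma gDeriv (y : ℝ) :
    HasDerivAt (fun y : ℝ => (y ^ 2 - 2 * y + 2) * Real.exp y - 2) (y ^ 2 * Real.exp y) y := by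
  have h1 : HasDerivAt (fun y : ℝ => y ^ 2 - 2 * y + 2) (2 * y - 2) y := by
    have := ((hasDerivAt_pow 2 y).sub ((hasDerivAt_id y).const_mul 2)).add_const 2
    refine this.congr_deriv ?_
    simp
  have := (h1.mul (Real.hasDerivAt_exp y)).sub_const 2
  refine this.congr_deriv ?_
  ring

lemma g_pos {x : ℝ} (hx : x ≠ 0) : 0 < ((x ^ 2 - 2 * x + 2) * Real.exp x - 2) / x ^ 3 := by
  set g : ℝ → ℝ := fun y => (y ^ 2 - 2 * y + 2) * Real.exp y - 2 with hg
  have hcont : Continuous g := by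
    apply Continuous.sub
    exact (by continuity : Continuous fun y : ℝ => (y ^ 2 - 2 * y + 2) * Real.exp y)
    exact continuous_const
  have hderiv : ∀ y, deriv g y = y ^ 2 * Real.exp y := fun y => (gDeriv y).deriv
  have hg0 : g 0 = 0 := by simp [hg]
  rcases hx.lt_or_gt with h | h
  · have mono : StrictMonoOn g (Iic 0) := by
      apply strictMonoOn_of_deriv_pos (convex_Iic 0) hcont.continuousOn
      intro y hy
      rw [interior_Iic] at hy
      rw [hderiv]
      have : y ≠ 0 := ne_of_lt hy
      positivity
    have hgx : g x < 0 := by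
      have := mono (le_of_lt h : x ∈ Iic 0) (Set.self_mem_Iic) h
      rwa [hg0] at this
    have hx3 : x ^ 3 < 0 := Odd.pow_neg (by decide) h
    exact div_pos_of_neg_of_neg hgx hx3
  · have mono : StrictMonoOn g (Ici 0) := by
      apply strictMonoOn_of_deriv_pos (convex_Ici 0) hcont.continuousOn
      intro y hy
      rw [interior_Ici] at hy
      rw [hderiv]
      have : y ≠ 0 := ne_of_gt hy
      positivity
    have hgx : 0 < g x := by
      have := mono (Set.self_mem_Ici) (le_of_lt h : x ∈ Ici 0) h
      rwa [hg0] at this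
    exact div_pos hgx (by positivity)


/-- The smooth extension `f` of `(e^x - 1)/x` at 0 is strictly convex on ℝ;
its second derivative equals `((x² - 2x + 2)e^x - 2)/x³ > 0` for `x ≠ 0`,
and `f''(0) = 1/3 > 0`. -/
theorem stmt_3
    (f : ℝ → ℝ)
    (hf : ∀ x : ℝ, f x = if x = 0 then 1 else (Real.exp x - 1) / x) :
    StrictConvexOn ℝ Set.univ f ∧
    (∀ x : ℝ, x ≠ 0 →
      deriv (deriv f) x = ((x ^ 2 - 2 * x + 2) * Real.exp x - 2) / x ^ 3 ∧
      ((x ^ 2 - 2 * x + 2) * Real.exp x - 2) / x ^ 3 > 0) ∧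
    (deriv (deriv f) 0 = 1 / 3 ∧ (1 : ℝ) / 3 > 0) := by
  have hfF : f = Faux := funext fun x => by rw [hf]; rfl
  have hd1 : ∀ x, HasDerivAt Faux (Faux1 x) x := fun x => by
    by_cases hx : x = 0
    · subst hx; simpa [Faux1] using hasDerivAt_Faux_zero
    · exact hasDerivAt_Faux_ne hx
  have hderiv1 : deriv f = Faux1 := by rw [hfF]; exact funext fun x => (hd1 x).deriv
  have hd2 : ∀ x, HasDerivAt Faux1 (Faux2 x) x := fun x => by
    by_cases hx : x = 0
    · subst hx; simpa [Faux2] using hasDerivAt_Faux1_zero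
    · exact hasDerivAt_Faux1_ne hx
  have hderiv2 : deriv (deriv f) = Faux2 := by
    rw [hderiv1]; exact funext fun x => (hd2 x).deriv
  have hpos : ∀ x, 0 < Faux2 x := fun x => by
    by_cases hx : x = 0
    · subst hx; norm_num [Faux2]
    · simp only [Faux2, if_neg hx]; exact g_pos hx
  refine ⟨?_, ?_, ?_, by norm_num⟩
  · apply strictConvexOn_of_deriv2_pos convex_univ
    · rw [hfF]; exact (Differentiable.continuous fun x => (hd1 x).differentiableAt).continuousOn
    · intro x _
      have h2 : deriv^[2] f = deriv (deriv f) := rfl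
      rw [h2, hderiv2]; exact hpos x
  · intro x hx
    refine ⟨?_, g_pos hx⟩
    rw [hderiv2]; simp only [Faux2, if_neg hx]
  · rw [hderiv2]; norm_num [Faux2]
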